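/- Let $H$ be a complex inner product space and let $u, v, \psi \in H$ be unit vectors. Then $|\langle u, \psi \rangle|^2 + |\langle v, \psi \rangle|^2 \leq 1 + |\langle u, v \rangle|$. -/

import Mathlib

/-- For unit vectors `u`, `v`, `ψ` in a complex inner product space,
`|⟨u, ψ⟩|² + |⟨v, ψ⟩|² ≤ 1 + |⟨u, v⟩|`. -/
theorem unit_vectors_overlap_bound
    (H : Type) [NormedAddCommGroup H] [InnerProductSpace ℂ H]
    (u v ψ : H) (hu : ‖u‖ = 1) (hv : ‖v‖ = 1) (hψ : ‖ψ‖ = 1) :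
    ‖(inner ℂ u ψ : ℂ)‖ ^ 2 + ‖(inner ℂ v ψ : ℂ)‖ ^ 2 ≤ 1 + ‖(inner ℂ u v : ℂ)‖ := by
  set c1 : ℂ := inner ℂ u ψ with hc1
  set c2 : ℂ := inner ℂ v ψ with hc2
  set g : ℝ := ‖(inner ℂ u v : ℂ)‖ with hgdef
  set S : ℝ := ‖c1‖ ^ 2 + ‖c2‖ ^ 2 with hSdef
  have hg : 0 ≤ g := norm_nonneg _
  rcases le_or_gt S 0 with hS | hS
  · nlinarith [sq_nonneg ‖c1‖, sq_nonneg ‖c2‖]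
  set w : H := c1 • u + c2 • v with hw
  -- inner w ψ = S
  have hwψ : (inner ℂ w ψ : ℂ) = (S : ℂ) := by
    rw [hw, inner_add_left, inner_smul_left, inner_smul_left, ← hc1, ← hc2]
    push_cast [hSdef]
    rw [← Complex.normSq_eq_conj_mul_self, ← Complex.normSq_eq_conj_mul_self]
    norm_cast
    simp [Complex.normSq_eq_norm_sq]
  have hS_le_w : S ≤ ‖w‖ := by
    have h1 : S ≤ ‖(inner ℂ w ψ : ℂ)‖ := by
      rw [hwψ]
      simp [abs_of_pos hS]
    have h2 : ‖(inner ℂ w ψ : ℂ)‖ ≤ ‖w‖ * ‖ψ‖ := norm_inner_le_norm w ψ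
    rw [hψ, mul_one] at h2
    linarith
  have hcross : (inner ℂ (c1 • u) (c2 • v) : ℂ).re ≤ ‖c1‖ * ‖c2‖ * g := by
    have h1 : (inner ℂ (c1 • u) (c2 • v) : ℂ).re ≤ ‖(inner ℂ (c1 • u) (c2 • v) : ℂ)‖ :=
      Complex.re_le_norm _
    have h2 : ‖(inner ℂ (c1 • u) (c2 • v) : ℂ)‖ = ‖c1‖ * ‖c2‖ * g := by
      rw [inner_smul_left, inner_smul_right]
      simp [norm_mul, hgdef]
      ring
    linarith
  have hw2 : ‖w‖ ^ 2 ≤ S * (1 + g) := by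
    have hns : ‖w‖ ^ 2 = ‖c1 • u‖ ^ 2 + 2 * (inner ℂ (c1 • u) (c2 • v) : ℂ).re + ‖c2 • v‖ ^ 2 := by
      rw [hw]
      exact norm_add_sq (𝕜 := ℂ) _ _
    have hn1 : ‖c1 • u‖ = ‖c1‖ := by rw [norm_smul, hu, mul_one]
    have hn2 : ‖c2 • v‖ = ‖c2‖ := by rw [norm_smul, hv, mul_one]
    rw [hn1, hn2] at hns
    nlinarith [sq_nonneg (‖c1‖ - ‖c2‖), norm_nonneg c1, norm_nonneg c2]
  nlinarith [norm_nonneg w]
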